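/- Let a : ℂ → ℂ be a nonconstant entire function with a(w) ≠ 0 for all w, and let c ∈ ℂ with c ≠ 0 and |c| ≠ 1. If v ∈ ℝ⁴ satisfies ⟪v, W(a(w), c/a(w))⟫ = 0 for every w ∈ ℂ (complex bilinear Minkowski form), then v = 0. In particular, the minimal surface with Weierstrass data (μ, a, b) = (1, a, c/a) is not contained in any hyperplane of ℝ⁴₁. -/

import Mathlib

/-- The complex-bilinear extension of the Minkowski form to `ℂ⁴`. -/
noncomputable def minkC (x y : Fin 4 → ℂ) : ℂ :=
  -(x 0 * y 0) + x 1 * y 1 + x 2 * y 2 + x 3 * y 3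

/-- The Weierstrass vector `W(a,b) = (a+b, 1+ab, i(1−ab), a−b) ∈ ℂ⁴`. -/
noncomputable def W (a b : ℂ) : Fin 4 → ℂ :=
  ![a + b, 1 + a * b, Complex.I * (1 - a * b), a - b]

lemma const_of_poly {a : ℂ → ℂ} (hc : Continuous a) (p : Polynomial ℂ)
    (hp : p ≠ 0) (h : ∀ w, p.eval (a w) = 0) : ∀ w, a w = a 0 := by
  have hfin : {z : ℂ | p.IsRoot z}.Finite := Polynomial.finite_setOf_isRoot hp
  have hclosed : IsClosed (a ⁻¹' {a 0}) := isClosed_singleton.preimage hc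
  have hcompl : (a ⁻¹' {a 0})ᶜ = a ⁻¹' ({z : ℂ | p.IsRoot z} \ {a 0}) := by
    ext w
    simp only [Set.mem_compl_iff, Set.mem_preimage, Set.mem_singleton_iff,
      Set.mem_diff, Set.mem_setOf_eq]
    exact ⟨fun hw => ⟨h w, hw⟩, fun hw => hw.2⟩
  have hopen : IsOpen (a ⁻¹' {a 0}) := by
    rw [← isClosed_compl_iff, hcompl]
    exact ((hfin.diff).isClosed).preimage hc
  have huniv : a ⁻¹' {a 0} = Set.univ :=
    IsClopen.eq_univ ⟨hclosed, hopen⟩ ⟨0, rfl⟩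
  intro w
  have hw : w ∈ a ⁻¹' {a 0} := huniv ▸ Set.mem_univ w
  exact hw

theorem stmt12 (a : ℂ → ℂ) (ha : Differentiable ℂ a)
    (hnc : ¬∃ k : ℂ, ∀ w : ℂ, a w = k) (ha0 : ∀ w : ℂ, a w ≠ 0)
    (c : ℂ) (hc0 : c ≠ 0) (hc1 : ‖c‖ ≠ 1)
    (v : Fin 4 → ℝ)
    (hv : ∀ w : ℂ, minkC (fun i => ((v i : ℝ) : ℂ)) (W (a w) (c / a w)) = 0) :
    v = 0 := by
  set α : ℂ := (v 3 : ℂ) - (v 0 : ℂ) with hαdef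
  set K : ℂ := (v 1 : ℂ) * (1 + c) + Complex.I * (v 2 : ℂ) * (1 - c) with hKdef
  set β : ℂ := c * (-(v 0 : ℂ) - (v 3 : ℂ)) with hβdef
  have key : ∀ w, α * a w ^ 2 + K * a w + β = 0 := by
    intro w
    have h := hv w
    simp only [minkC, W, Matrix.cons_val_zero, Matrix.cons_val_one, Matrix.head_cons,
      Matrix.cons_val_two, Matrix.tail_cons, Matrix.cons_val_three] at h
    field_simp [ha0 w] at h
    rw [hαdef, hKdef, hβdef]
    linear_combination h
  set P : Polynomial ℂ :=
    Polynomial.C α * Polynomial.X ^ 2 + Polynomial.C K * Polynomial.X + Polynomial.C β with hPdef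
  have hP : P = 0 := by
    by_contra hP
    have hconst := const_of_poly ha.continuous P hP (fun w => by
      simp [hPdef, key w])
    exact hnc ⟨a 0, hconst⟩
  have hα : α = 0 := by
    have := congrArg (fun q => Polynomial.coeff q 2) hP
    simpa [hPdef, Polynomial.coeff_add, Polynomial.coeff_C_mul, Polynomial.coeff_X_pow,
      Polynomial.coeff_C, Polynomial.coeff_X] using this
  have hK : K = 0 := by
    have := congrArg (fun q => Polynomial.coeff q 1) hP
    simpa [hPdef, Polynomial.coeff_add, Polynomial.coeff_C_mul, Polynomial.coeff_X_pow,
      Polynomial.coeff_C, Polynomial.coeff_X] using this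
  have hβ : β = 0 := by
    have := congrArg (fun q => Polynomial.coeff q 0) hP
    simpa [hPdef, Polynomial.coeff_add, Polynomial.coeff_C_mul, Polynomial.coeff_X_pow,
      Polynomial.coeff_C, Polynomial.coeff_X] using this
  -- from hβ and hc0 : v 0 + v 3 = 0
  have hsum : (v 0 : ℂ) + (v 3 : ℂ) = 0 := by
    rw [hβdef] at hβ
    rcases mul_eq_zero.mp hβ with h | h
    · exact absurd h hc0
    · linear_combination -h
  have hdiff : (v 3 : ℂ) - (v 0 : ℂ) = 0 := hα
  have hv0 : v 0 = 0 := by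
    have : (v 0 : ℂ) = 0 := by linear_combination (hsum - hdiff) / 2
    exact_mod_cast this
  have hv3 : v 3 = 0 := by
    have : (v 3 : ℂ) = 0 := by linear_combination (hsum + hdiff) / 2
    exact_mod_cast this
  -- from hK : v 1 = v 2 = 0
  set z : ℂ := (v 1 : ℂ) + (v 2 : ℂ) * Complex.I with hzdef
  have hzconj : (starRingEnd ℂ) z = (v 1 : ℂ) - (v 2 : ℂ) * Complex.I := by
    simp [hzdef, map_add, map_mul, Complex.conj_I]
    ring
  have hzc : z + c * (starRingEnd ℂ) z = 0 := by
    rw [hzdef, hzconj]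
    rw [hKdef] at hK
    linear_combination hK
  have hz : z = 0 := by
    by_contra hz
    have habs : ‖c * (starRingEnd ℂ) z‖ = ‖z‖ := by
      have : c * (starRingEnd ℂ) z = -z := by linear_combination hzc
      rw [this]
      simp
    rw [norm_mul, Complex.norm_conj] at habs
    have hzabs : ‖z‖ ≠ 0 := by simpa using hz
    have : ‖c‖ = 1 := by
      have h1 : ‖c‖ * ‖z‖ = 1 * ‖z‖ := by
        rw [habs, one_mul]
      exact mul_right_cancel₀ hzabs h1
    exact hc1 this
  have hv1 : v 1 = 0 := by
    have : ((v 1 : ℂ) + (v 2 : ℂ) * Complex.I).re = 0 := by rw [← hzdef, hz]; simp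
    simpa using this
  have hv2 : v 2 = 0 := by
    have : ((v 1 : ℂ) + (v 2 : ℂ) * Complex.I).im = 0 := by rw [← hzdef, hz]; simp
    simpa using this
  funext i
  fin_cases i <;> simp [hv0, hv1, hv2, hv3]
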